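/- Let t be a positive integer and let H = ⟨a, b | a^(3^(t+1)) = b^(3^(t+1)) = 1, b^(-1)ab = a^(1+3^t)⟩. Then the map sending a to a^(2·3^t + 1)b^(-3) and b to a^(2·3^t + 1)b^(-2) extends to an automorphism of H. -/

import Mathlib

namespace Stmt10Aux

/-- triangular numbers: `tri e = e*(e-1)/2`. -/
def tri : ℕ → ℕ
  | 0 => 0
  | e + 1 => tri e + e

lemma two_tri : ∀ e : ℕ, 2 * tri (e + 1) = (e + 1) * e := by
  intro e
  induction e with
  | zero => rfl
  | succ e ih =>
      have : tri (e + 1 + 1) = tri (e + 1) + (e + 1) := rfl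
      rw [this, Nat.mul_add, ih]
      ring

lemma tri_odd (k : ℕ) : tri (2 * k + 1) = (2 * k + 1) * k := by
  have h := two_tri (2 * k)
  have h2 : (2 * k + 1) * (2 * k) = 2 * ((2 * k + 1) * k) := by ring
  omega

lemma tri_pow3 (s : ℕ) : ∃ K : ℕ, tri (3 ^ (s + 2)) = 3 ^ (s + 2) * K := by
  obtain ⟨k, hk⟩ : Odd (3 ^ (s + 2)) := Odd.pow ⟨1, rfl⟩
  exact ⟨k, by rw [hk, tri_odd]⟩

section Grp

variable {G : Type*} [Group G] {a b : G} {s : ℕ}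

/-- `3^(s+2) ∣ X - Y → a^X = a^Y` -/
lemma ared (ha : a ^ 3 ^ (s + 2) = 1) {X Y : ℤ} (h : (3 : ℤ) ^ (s + 2) ∣ X - Y) :
    a ^ X = a ^ Y := by
  obtain ⟨k, hk⟩ := h
  have hX : X = Y + 3 ^ (s + 2) * k := by linarith
  have hN : a ^ ((3 : ℤ) ^ (s + 2)) = 1 := by
    have : ((3 ^ (s + 2) : ℕ) : ℤ) = (3 : ℤ) ^ (s + 2) := by push_cast; ring
    rw [← this, zpow_natCast, ha]
  rw [hX, zpow_add, zpow_mul, hN, one_zpow, mul_one]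

lemma hcomm (ha : a ^ 3 ^ (s + 2) = 1)
    (hr : b⁻¹ * a * b = a ^ (1 + 3 ^ (s + 1))) :
    Commute (a ^ 3 ^ (s + 1) : G) b := by
  have h1 : b⁻¹ * a ^ 3 ^ (s + 1) * b = (b⁻¹ * a * b) ^ 3 ^ (s + 1) := by
    have h0 := conj_pow (a := b⁻¹) (b := a) (i := 3 ^ (s + 1))
    rw [inv_inv] at h0
    exact h0.symm
  have h2 : (a ^ (1 + 3 ^ (s + 1))) ^ 3 ^ (s + 1) = a ^ 3 ^ (s + 1) := by
    rw [← pow_mul]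
    have : (1 + 3 ^ (s + 1)) * 3 ^ (s + 1) = 3 ^ (s + 1) + 3 ^ (s + 2) * 3 ^ s := by ring
    rw [this, pow_add, pow_mul, ha, one_pow, mul_one]
  rw [hr, h2] at h1
  have := h1
  rw [mul_assoc] at this
  exact inv_mul_eq_iff_eq_mul.mp this

lemma hba (ha : a ^ 3 ^ (s + 2) = 1)
    (hr : b⁻¹ * a * b = a ^ (1 + 3 ^ (s + 1))) :
    b * a = a ^ ((1 : ℤ) - 3 ^ (s + 1)) * b := by
  have hab : a * b = b * a ^ (1 + 3 ^ (s + 1)) := by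
    rw [← hr]; group
  have hc := (hcomm ha hr).inv_left
  calc b * a = b * a ^ (1 + 3 ^ (s + 1)) * (a ^ 3 ^ (s + 1))⁻¹ := by
        rw [pow_add, pow_one]; group
    _ = a * b * (a ^ 3 ^ (s + 1))⁻¹ := by rw [← hab]
    _ = a * (a ^ 3 ^ (s + 1))⁻¹ * b := by
        rw [mul_assoc, mul_assoc, hc.eq]
    _ = a ^ ((1 : ℤ) - 3 ^ (s + 1)) * b := by
        rw [zpow_sub, zpow_one]
        norm_cast

lemma L3 (ha : a ^ 3 ^ (s + 2) = 1)
    (hr : b⁻¹ * a * b = a ^ (1 + 3 ^ (s + 1))) :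
    ∀ j : ℤ, b ^ j * a = a ^ (1 - j * 3 ^ (s + 1)) * b ^ j := by
  have hc := hcomm ha hr
  have hinv : b⁻¹ * a = a ^ (1 + 3 ^ (s + 1)) * b⁻¹ := by
    rw [← hr]; group
  intro j
  induction j using Int.induction_on with
  | zero => simp
  | succ j ih =>
      have hczj : Commute ((a ^ 3 ^ (s + 1))⁻¹) (b ^ (j : ℤ)) :=
        (hc.inv_left).zpow_right _
      calc b ^ ((j : ℤ) + 1) * a = b ^ (j : ℤ) * (b * a) := by
            rw [zpow_add, zpow_one, mul_assoc]
        _ = b ^ (j : ℤ) * (a * (a ^ 3 ^ (s + 1))⁻¹ * b) := by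
            rw [hba ha hr, zpow_sub, zpow_one]; norm_cast
        _ = (b ^ (j : ℤ) * a) * ((a ^ 3 ^ (s + 1))⁻¹ * b) := by group
        _ = a ^ (1 - (j : ℤ) * 3 ^ (s + 1)) * (b ^ (j : ℤ) * (a ^ 3 ^ (s + 1))⁻¹) * b := by
            rw [ih]; group
        _ = a ^ (1 - (j : ℤ) * 3 ^ (s + 1)) * ((a ^ 3 ^ (s + 1))⁻¹ * b ^ (j : ℤ)) * b := by
            rw [hczj.eq]
        _ = (a ^ (1 - (j : ℤ) * 3 ^ (s + 1)) * (a ^ 3 ^ (s + 1))⁻¹) * b ^ ((j : ℤ) + 1) := by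
            rw [zpow_add, zpow_one]; group
        _ = a ^ (1 - ((j : ℤ) + 1) * 3 ^ (s + 1)) * b ^ ((j : ℤ) + 1) := by
            congr 1
            rw [← zpow_natCast a (3 ^ (s + 1)), ← zpow_neg, ← zpow_add]
            congr 1
            push_cast
            ring
  | pred j ih =>
      have hczj : Commute (a ^ 3 ^ (s + 1)) (b ^ (-(j : ℤ))) := hc.zpow_right _
      calc b ^ (-(j : ℤ) - 1) * a = b ^ (-(j : ℤ)) * (b⁻¹ * a) := by
            rw [zpow_sub, zpow_one, mul_assoc]
        _ = b ^ (-(j : ℤ)) * (a * a ^ 3 ^ (s + 1) * b⁻¹) := by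
            rw [hinv, pow_add, pow_one]
        _ = (b ^ (-(j : ℤ)) * a) * (a ^ 3 ^ (s + 1) * b⁻¹) := by group
        _ = a ^ (1 - (-(j : ℤ)) * 3 ^ (s + 1)) * (b ^ (-(j : ℤ)) * a ^ 3 ^ (s + 1)) * b⁻¹ := by
            rw [ih]; group
        _ = a ^ (1 - (-(j : ℤ)) * 3 ^ (s + 1)) * (a ^ 3 ^ (s + 1) * b ^ (-(j : ℤ))) * b⁻¹ := by
            rw [← hczj.eq]
        _ = (a ^ (1 - (-(j : ℤ)) * 3 ^ (s + 1)) * a ^ 3 ^ (s + 1)) * b ^ (-(j : ℤ) - 1) := by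
            rw [zpow_sub, zpow_one]; group
        _ = a ^ (1 - (-(j : ℤ) - 1) * 3 ^ (s + 1)) * b ^ (-(j : ℤ) - 1) := by
            congr 1
            rw [← zpow_natCast a (3 ^ (s + 1)), ← zpow_add]
            congr 1
            push_cast
            ring

lemma L4 (ha : a ^ 3 ^ (s + 2) = 1)
    (hr : b⁻¹ * a * b = a ^ (1 + 3 ^ (s + 1))) (j k : ℤ) :
    b ^ j * a ^ k = a ^ (k - j * k * 3 ^ (s + 1)) * b ^ j := by
  have h1 : b ^ j * a * (b ^ j)⁻¹ = a ^ (1 - j * 3 ^ (s + 1)) := by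
    rw [L3 ha hr]; group
  have h2 : b ^ j * a ^ k * (b ^ j)⁻¹ = (b ^ j * a * (b ^ j)⁻¹) ^ k := by
    rw [conj_zpow]
  rw [h1, ← zpow_mul] at h2
  have h3 : b ^ j * a ^ k = a ^ ((1 - j * 3 ^ (s + 1)) * k) * b ^ j := by
    rw [← h2]; group
  rw [h3]
  congr 1
  ring

lemma L5 (ha : a ^ 3 ^ (s + 2) = 1)
    (hr : b⁻¹ * a * b = a ^ (1 + 3 ^ (s + 1))) (e : ℕ) (i j : ℤ) :
    (a ^ i * b ^ j) ^ e
      = a ^ (i * e - j * i * 3 ^ (s + 1) * (tri e : ℤ)) * b ^ (j * e) := by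
  induction e with
  | zero => simp [tri]
  | succ e ih =>
      have htri : tri (e + 1) = tri e + e := rfl
      rw [pow_succ, ih]
      calc a ^ (i * e - j * i * 3 ^ (s + 1) * (tri e : ℤ)) * b ^ (j * e) * (a ^ i * b ^ j)
          = a ^ (i * e - j * i * 3 ^ (s + 1) * (tri e : ℤ)) * (b ^ (j * e) * a ^ i) * b ^ j := by
            group
        _ = a ^ (i * e - j * i * 3 ^ (s + 1) * (tri e : ℤ))
              * (a ^ (i - (j * e) * i * 3 ^ (s + 1)) * b ^ (j * e)) * b ^ j := by
            rw [L4 ha hr]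
        _ = (a ^ (i * e - j * i * 3 ^ (s + 1) * (tri e : ℤ))
              * a ^ (i - (j * e) * i * 3 ^ (s + 1))) * (b ^ (j * e) * b ^ j) := by
            group
        _ = a ^ (i * (e + 1 : ℕ) - j * i * 3 ^ (s + 1) * (tri (e + 1) : ℤ))
              * b ^ (j * (e + 1 : ℕ)) := by
            rw [← zpow_add, ← zpow_add, htri]
            congr 1 <;> push_cast <;> ring

lemma Lmul (ha : a ^ 3 ^ (s + 2) = 1)
    (hr : b⁻¹ * a * b = a ^ (1 + 3 ^ (s + 1))) (i j k l : ℤ) :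
    (a ^ i * b ^ j) * (a ^ k * b ^ l)
      = a ^ (i + k - j * k * 3 ^ (s + 1)) * b ^ (j + l) := by
  calc (a ^ i * b ^ j) * (a ^ k * b ^ l) = a ^ i * (b ^ j * a ^ k) * b ^ l := by group
    _ = a ^ i * (a ^ (k - j * k * 3 ^ (s + 1)) * b ^ j) * b ^ l := by rw [L4 ha hr]
    _ = (a ^ i * a ^ (k - j * k * 3 ^ (s + 1))) * (b ^ j * b ^ l) := by group
    _ = a ^ (i + k - j * k * 3 ^ (s + 1)) * b ^ (j + l) := by
        rw [← zpow_add, ← zpow_add]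
        congr 1
        ring

lemma Linv (ha : a ^ 3 ^ (s + 2) = 1)
    (hr : b⁻¹ * a * b = a ^ (1 + 3 ^ (s + 1))) (i j : ℤ) :
    (a ^ i * b ^ j)⁻¹ = a ^ (-i - j * i * 3 ^ (s + 1)) * b ^ (-j) := by
  rw [mul_inv_rev, ← zpow_neg, ← zpow_neg, L4 ha hr]
  congr 1
  ring

lemma norm_eq (ha : a ^ 3 ^ (s + 2) = 1) (hb : b ^ 3 ^ (s + 2) = 1)
    {X Y X' Y' : ℤ} (h1 : (3 : ℤ) ^ (s + 2) ∣ X - X') (h2 : (3 : ℤ) ^ (s + 2) ∣ Y - Y') :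
    a ^ X * b ^ Y = a ^ X' * b ^ Y' := by
  rw [ared ha h1, ared hb h2]

lemma dvd9y {s : ℕ} (u v D : ℤ)
    (h : D = 3 ^ (s + 2) * u + (3 ^ (s + 1) * 3 ^ (s + 1)) * v) :
    (3 : ℤ) ^ (s + 2) ∣ D := by
  subst h
  refine dvd_add (dvd_mul_right _ _) ⟨3 ^ s * v, by ring⟩

end Grp

end Stmt10Aux
namespace Stmt10Aux
section Grp2

variable {G : Type*} [Group G] {a b : G} {s : ℕ}

lemma zp_three (x : G) : x ^ (3 : ℤ) = x ^ (3 : ℕ) := by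
  rw [← zpow_natCast]; norm_num

lemma zp_neg3 (x : G) : x ^ (-3 : ℤ) = (x ^ (3 : ℕ))⁻¹ := by
  rw [← zp_three, ← zpow_neg]

lemma zp_two (x : G) : x ^ (2 : ℤ) = x ^ (2 : ℕ) := by
  rw [← zpow_natCast]; norm_num

lemma zp_neg2 (x : G) : x ^ (-2 : ℤ) = (x ^ (2 : ℕ))⁻¹ := by
  rw [← zp_two, ← zpow_neg]

lemma relA1 (ha : a ^ 3 ^ (s + 2) = 1) (hb : b ^ 3 ^ (s + 2) = 1)
    (hr : b⁻¹ * a * b = a ^ (1 + 3 ^ (s + 1))) :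
    (a ^ (2 * 3 ^ (s + 1) + 1) * b ^ (-3 : ℤ)) ^ 3 ^ (s + 2) = 1 := by
  obtain ⟨K, hK⟩ := tri_pow3 s
  have hKZ : ((tri (3 ^ (s + 2)) : ℕ) : ℤ) = 3 ^ (s + 2) * (K : ℤ) := by exact_mod_cast hK
  have h0 : a ^ (0 : ℤ) * b ^ (0 : ℤ) = 1 := by simp
  rw [← zpow_natCast a (2 * 3 ^ (s + 1) + 1), L5 ha hr]
  refine Eq.trans (norm_eq ha hb ?_ ?_) h0
  · rw [hKZ]
    exact dvd9y ((2 * 3 ^ (s + 1) + 1) * (1 + 3 * 3 ^ (s + 1) * K)) 0 _ (by push_cast; ring)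
  · exact dvd9y (-3) 0 _ (by push_cast; ring)

lemma relA2 (ha : a ^ 3 ^ (s + 2) = 1) (hb : b ^ 3 ^ (s + 2) = 1)
    (hr : b⁻¹ * a * b = a ^ (1 + 3 ^ (s + 1))) :
    (a ^ (2 * 3 ^ (s + 1) + 1) * b ^ (-2 : ℤ)) ^ 3 ^ (s + 2) = 1 := by
  obtain ⟨K, hK⟩ := tri_pow3 s
  have hKZ : ((tri (3 ^ (s + 2)) : ℕ) : ℤ) = 3 ^ (s + 2) * (K : ℤ) := by exact_mod_cast hK
  have h0 : a ^ (0 : ℤ) * b ^ (0 : ℤ) = 1 := by simp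
  rw [← zpow_natCast a (2 * 3 ^ (s + 1) + 1), L5 ha hr]
  refine Eq.trans (norm_eq ha hb ?_ ?_) h0
  · rw [hKZ]
    exact dvd9y ((2 * 3 ^ (s + 1) + 1) * (1 + 2 * 3 ^ (s + 1) * K)) 0 _ (by push_cast; ring)
  · exact dvd9y (-2) 0 _ (by push_cast; ring)

lemma relA3 (ha : a ^ 3 ^ (s + 2) = 1) (hb : b ^ 3 ^ (s + 2) = 1)
    (hr : b⁻¹ * a * b = a ^ (1 + 3 ^ (s + 1))) :
    (a ^ (2 * 3 ^ (s + 1) + 1) * b ^ (-2 : ℤ))⁻¹ * (a ^ (2 * 3 ^ (s + 1) + 1) * b ^ (-3 : ℤ))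
        * (a ^ (2 * 3 ^ (s + 1) + 1) * b ^ (-2 : ℤ))
      = (a ^ (2 * 3 ^ (s + 1) + 1) * b ^ (-3 : ℤ)) ^ (1 + 3 ^ (s + 1)) := by
  rw [← zpow_natCast a (2 * 3 ^ (s + 1) + 1), Linv ha hr, Lmul ha hr, Lmul ha hr, L5 ha hr]
  refine norm_eq ha hb ?_ ?_
  · exact dvd9y (-((2 * 3 ^ (s + 1) + 1) * (tri (1 + 3 ^ (s + 1)) : ℤ))) 0 _ (by push_cast; ring)
  · exact dvd9y 1 0 _ (by push_cast; ring)

lemma relB1 (ha : a ^ 3 ^ (s + 2) = 1) (hb : b ^ 3 ^ (s + 2) = 1)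
    (hr : b⁻¹ * a * b = a ^ (1 + 3 ^ (s + 1))) :
    (a ^ ((3 : ℤ) ^ (s + 1) - 2) * b ^ (3 : ℤ)) ^ 3 ^ (s + 2) = 1 := by
  obtain ⟨K, hK⟩ := tri_pow3 s
  have hKZ : ((tri (3 ^ (s + 2)) : ℕ) : ℤ) = 3 ^ (s + 2) * (K : ℤ) := by exact_mod_cast hK
  have h0 : a ^ (0 : ℤ) * b ^ (0 : ℤ) = 1 := by simp
  rw [L5 ha hr]
  refine Eq.trans (norm_eq ha hb ?_ ?_) h0
  · rw [hKZ]
    exact dvd9y ((3 ^ (s + 1) - 2) * (1 - 3 * 3 ^ (s + 1) * K)) 0 _ (by push_cast; ring)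
  · exact dvd9y 3 0 _ (by push_cast; ring)

lemma relB2 (ha : a ^ 3 ^ (s + 2) = 1) (hb : b ^ 3 ^ (s + 2) = 1)
    (hr : b⁻¹ * a * b = a ^ (1 + 3 ^ (s + 1))) :
    (a⁻¹ * b) ^ 3 ^ (s + 2) = 1 := by
  obtain ⟨K, hK⟩ := tri_pow3 s
  have hKZ : ((tri (3 ^ (s + 2)) : ℕ) : ℤ) = 3 ^ (s + 2) * (K : ℤ) := by exact_mod_cast hK
  have h0 : a ^ (0 : ℤ) * b ^ (0 : ℤ) = 1 := by simp
  rw [show (a⁻¹ * b : G) = a ^ (-1 : ℤ) * b ^ (1 : ℤ) by simp, L5 ha hr]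
  refine Eq.trans (norm_eq ha hb ?_ ?_) h0
  · rw [hKZ]
    exact dvd9y (-1 + 3 ^ (s + 1) * K) 0 _ (by push_cast; ring)
  · exact dvd9y 1 0 _ (by push_cast; ring)

lemma relB3 (ha : a ^ 3 ^ (s + 2) = 1) (hb : b ^ 3 ^ (s + 2) = 1)
    (hr : b⁻¹ * a * b = a ^ (1 + 3 ^ (s + 1))) :
    (a⁻¹ * b)⁻¹ * (a ^ ((3 : ℤ) ^ (s + 1) - 2) * b ^ (3 : ℤ)) * (a⁻¹ * b)
      = (a ^ ((3 : ℤ) ^ (s + 1) - 2) * b ^ (3 : ℤ)) ^ (1 + 3 ^ (s + 1)) := by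
  rw [show (a⁻¹ * b : G) = a ^ (-1 : ℤ) * b ^ (1 : ℤ) by simp,
    Linv ha hr, Lmul ha hr, Lmul ha hr, L5 ha hr]
  refine norm_eq ha hb ?_ ?_
  · exact dvd9y (1 + (3 ^ (s + 1) - 2) * (tri (1 + 3 ^ (s + 1)) : ℤ)) 0 _ (by push_cast; ring)
  · exact dvd9y (-1) 0 _ (by push_cast; ring)

lemma inv_mul_gen (x y : G) (m : ℕ) :
    (x ^ m * y ^ (-3 : ℤ))⁻¹ * (x ^ m * y ^ (-2 : ℤ)) = y := by
  group

lemma compφψ0 (ha : a ^ 3 ^ (s + 2) = 1) (hb : b ^ 3 ^ (s + 2) = 1)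
    (hr : b⁻¹ * a * b = a ^ (1 + 3 ^ (s + 1))) :
    (a ^ (2 * 3 ^ (s + 1) + 1) * b ^ (-3 : ℤ)) ^ ((3 : ℤ) ^ (s + 1) - 2)
      * (a ^ (2 * 3 ^ (s + 1) + 1) * b ^ (-2 : ℤ)) ^ (3 : ℤ) = a := by
  have h3 : (2 : ℕ) ≤ 3 ^ (s + 1) := le_trans (by norm_num)
    (Nat.pow_le_pow_right (by norm_num) (by omega : 1 ≤ s + 1))
  have h2 : ((3 ^ (s + 1) - 2 : ℕ) : ℤ) = (3 : ℤ) ^ (s + 1) - 2 := by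
    rw [Nat.cast_sub h3]; push_cast; ring
  have h0 : a ^ (1 : ℤ) * b ^ (0 : ℤ) = a := by simp
  rw [← h2, zpow_natCast, zp_three, ← zpow_natCast a (2 * 3 ^ (s + 1) + 1),
    L5 ha hr, L5 ha hr, Lmul ha hr]
  refine Eq.trans (norm_eq ha hb ?_ ?_) h0
  · rw [h2]
    exact dvd9y (1 + (2 * 3 ^ (s + 1) + 1) * (tri (3 ^ (s + 1) - 2) : ℤ)
        + 2 * (2 * 3 ^ (s + 1) + 1)
        + ((3 : ℤ) ^ (s + 1) - 2) * (3 * (2 * 3 ^ (s + 1) + 1)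
            + 6 * (2 * 3 ^ (s + 1) + 1) * 3 ^ (s + 1))) 2 _
      (by push_cast [show tri 3 = 3 from rfl]; ring)
  · rw [h2]
    exact dvd9y (-1) 0 _ (by push_cast [show tri 3 = 3 from rfl]; ring)

lemma compψφ0 (ha : a ^ 3 ^ (s + 2) = 1) (hb : b ^ 3 ^ (s + 2) = 1)
    (hr : b⁻¹ * a * b = a ^ (1 + 3 ^ (s + 1))) :
    (a ^ ((3 : ℤ) ^ (s + 1) - 2) * b ^ (3 : ℤ)) ^ (2 * 3 ^ (s + 1) + 1)
      * (a⁻¹ * b) ^ (-3 : ℤ) = a := by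
  have h0 : a ^ (1 : ℤ) * b ^ (0 : ℤ) = a := by simp
  rw [show (a⁻¹ * b : G) = a ^ (-1 : ℤ) * b ^ (1 : ℤ) by simp,
    zp_neg3, L5 ha hr, L5 ha hr, Linv ha hr, Lmul ha hr]
  refine Eq.trans (norm_eq ha hb ?_ ?_) h0
  · exact dvd9y (1 - 3 * (2 * 3 ^ (s + 1) + 1)
        - ((3 : ℤ) ^ (s + 1) - 2) * (tri (2 * 3 ^ (s + 1) + 1) : ℤ))
      (-7 - 18 * (2 * 3 ^ (s + 1) + 1) + 27 * (2 * 3 ^ (s + 1) + 1) * 3 ^ (s + 1)) _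
      (by push_cast [show tri 3 = 3 from rfl]; ring)
  · exact dvd9y 2 0 _ (by push_cast [show tri 3 = 3 from rfl]; ring)

lemma compψφ1 (ha : a ^ 3 ^ (s + 2) = 1) (hb : b ^ 3 ^ (s + 2) = 1)
    (hr : b⁻¹ * a * b = a ^ (1 + 3 ^ (s + 1))) :
    (a ^ ((3 : ℤ) ^ (s + 1) - 2) * b ^ (3 : ℤ)) ^ (2 * 3 ^ (s + 1) + 1)
      * (a⁻¹ * b) ^ (-2 : ℤ) = b := by
  have h0 : a ^ (0 : ℤ) * b ^ (1 : ℤ) = b := by simp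
  rw [show (a⁻¹ * b : G) = a ^ (-1 : ℤ) * b ^ (1 : ℤ) by simp,
    zp_neg2, L5 ha hr, L5 ha hr, Linv ha hr, Lmul ha hr]
  refine Eq.trans (norm_eq ha hb ?_ ?_) h0
  · exact dvd9y (-((3 : ℤ) ^ (s + 1) - 2) * (tri (2 * 3 ^ (s + 1) + 1) : ℤ)
        - 2 * (2 * 3 ^ (s + 1) + 1))
      (-9 * (2 * 3 ^ (s + 1) + 1) + 6 * (2 * 3 ^ (s + 1) + 1) * 3 ^ (s + 1)) _
      (by push_cast [show tri 2 = 1 from rfl]; ring)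
  · exact dvd9y 2 0 _ (by push_cast [show tri 2 = 1 from rfl]; ring)

end Grp2
end Stmt10Aux

/-- Relations for the group `⟨a, b | a^(3^(t+1)) = b^(3^(t+1)) = 1, b⁻¹ab = a^(1+3^t)⟩`,
with generator `0` playing the role of `a` and `1` the role of `b`. -/
def hRels (t : ℕ) : Set (FreeGroup (Fin 2)) :=
  { FreeGroup.of 0 ^ 3 ^ (t + 1), FreeGroup.of 1 ^ 3 ^ (t + 1),
    (FreeGroup.of 1)⁻¹ * FreeGroup.of 0 * FreeGroup.of 1 *
      (FreeGroup.of 0 ^ (1 + 3 ^ t))⁻¹ }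

theorem stmt_10 (t : ℕ) (ht : 0 < t) :
    ∃ φ : PresentedGroup (hRels t) ≃* PresentedGroup (hRels t),
      φ (PresentedGroup.of 0) =
          (PresentedGroup.of 0 : PresentedGroup (hRels t)) ^ (2 * 3 ^ t + 1) *
            (PresentedGroup.of 1 : PresentedGroup (hRels t)) ^ (-3 : ℤ) ∧
      φ (PresentedGroup.of 1) =
          (PresentedGroup.of 0 : PresentedGroup (hRels t)) ^ (2 * 3 ^ t + 1) *
            (PresentedGroup.of 1 : PresentedGroup (hRels t)) ^ (-2 : ℤ) := by
  obtain ⟨s, rfl⟩ : ∃ s, t = s + 1 := ⟨t - 1, by omega⟩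
  clear ht
  set P := PresentedGroup (hRels (s + 1)) with hP
  have hmk : ∀ r ∈ hRels (s + 1), (PresentedGroup.mk (hRels (s + 1)) r) = 1 := fun r hr =>
    (QuotientGroup.eq_one_iff r).mpr (Subgroup.subset_normalClosure hr)
  have ha : (PresentedGroup.of 0 : P) ^ 3 ^ (s + 2) = 1 := by
    have h := hmk _ (Set.mem_insert _ _)
    rw [map_pow] at h
    exact h
  have hb : (PresentedGroup.of 1 : P) ^ 3 ^ (s + 2) = 1 := by
    have h := hmk _ (Set.mem_insert_iff.mpr (Or.inr (Set.mem_insert _ _)))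
    rw [map_pow] at h
    exact h
  have hr : (PresentedGroup.of 1 : P)⁻¹ * PresentedGroup.of 0 * PresentedGroup.of 1
      = (PresentedGroup.of 0 : P) ^ (1 + 3 ^ (s + 1)) := by
    have h := hmk _ (Set.mem_insert_iff.mpr (Or.inr (Set.mem_insert_iff.mpr
      (Or.inr rfl))))
    rw [map_mul, map_mul, map_mul, map_inv, map_inv, map_pow] at h
    exact mul_inv_eq_one.mp h
  -- the images of the generators under `φ` and `ψ`
  set A : P := PresentedGroup.of 0 ^ (2 * 3 ^ (s + 1) + 1) * PresentedGroup.of 1 ^ (-3 : ℤ)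
    with hA
  set B : P := PresentedGroup.of 0 ^ (2 * 3 ^ (s + 1) + 1) * PresentedGroup.of 1 ^ (-2 : ℤ)
    with hB
  set C : P := PresentedGroup.of 0 ^ ((3 : ℤ) ^ (s + 1) - 2) * PresentedGroup.of 1 ^ (3 : ℤ)
    with hC
  set D : P := (PresentedGroup.of 0 : P)⁻¹ * PresentedGroup.of 1 with hD
  have hF : ∀ r ∈ hRels (s + 1), FreeGroup.lift (![A, B]) r = 1 := by
    intro r hrm
    simp only [hRels, Set.mem_insert_iff, Set.mem_singleton_iff] at hrm
    rcases hrm with rfl | rfl | rfl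
    · rw [map_pow, FreeGroup.lift_apply_of]
      exact Stmt10Aux.relA1 ha hb hr
    · rw [map_pow, FreeGroup.lift_apply_of]
      exact Stmt10Aux.relA2 ha hb hr
    · simp only [map_mul, map_inv, map_pow, FreeGroup.lift_apply_of, Matrix.cons_val_zero,
        Matrix.cons_val_one, Matrix.head_cons]
      rw [Stmt10Aux.relA3 ha hb hr]
      exact mul_inv_cancel _
  have hG : ∀ r ∈ hRels (s + 1), FreeGroup.lift (![C, D]) r = 1 := by
    intro r hrm
    simp only [hRels, Set.mem_insert_iff, Set.mem_singleton_iff] at hrm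
    rcases hrm with rfl | rfl | rfl
    · rw [map_pow, FreeGroup.lift_apply_of]
      exact Stmt10Aux.relB1 ha hb hr
    · rw [map_pow, FreeGroup.lift_apply_of]
      exact Stmt10Aux.relB2 ha hb hr
    · simp only [map_mul, map_inv, map_pow, FreeGroup.lift_apply_of, Matrix.cons_val_zero,
        Matrix.cons_val_one, Matrix.head_cons]
      rw [Stmt10Aux.relB3 ha hb hr]
      exact mul_inv_cancel _
  set φ : P →* P := PresentedGroup.toGroup hF with hφ
  set ψ : P →* P := PresentedGroup.toGroup hG with hψ
  have hφ0 : φ (PresentedGroup.of 0) = A := PresentedGroup.toGroup.of hF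
  have hφ1 : φ (PresentedGroup.of 1) = B := PresentedGroup.toGroup.of hF
  have hψ0 : ψ (PresentedGroup.of 0) = C := PresentedGroup.toGroup.of hG
  have hψ1 : ψ (PresentedGroup.of 1) = D := PresentedGroup.toGroup.of hG
  have h1 : ψ.comp φ = MonoidHom.id P := by
    refine PresentedGroup.ext fun i => ?_
    fin_cases i
    · show ψ (φ (PresentedGroup.of 0)) = PresentedGroup.of 0
      rw [hφ0, hA, map_mul, map_pow, map_zpow, hψ0, hψ1, hC, hD]
      exact Stmt10Aux.compψφ0 ha hb hr
    · show ψ (φ (PresentedGroup.of 1)) = PresentedGroup.of 1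
      rw [hφ1, hB, map_mul, map_pow, map_zpow, hψ0, hψ1, hC, hD]
      exact Stmt10Aux.compψφ1 ha hb hr
  have h2 : φ.comp ψ = MonoidHom.id P := by
    refine PresentedGroup.ext fun i => ?_
    fin_cases i
    · show φ (ψ (PresentedGroup.of 0)) = PresentedGroup.of 0
      rw [hψ0, hC, map_mul, map_zpow, map_zpow, hφ0, hφ1, hA, hB]
      exact Stmt10Aux.compφψ0 ha hb hr
    · show φ (ψ (PresentedGroup.of 1)) = PresentedGroup.of 1
      rw [hψ1, hD, map_mul, map_inv, hφ0, hφ1, hA, hB]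
      exact Stmt10Aux.inv_mul_gen _ _ _
  refine ⟨MonoidHom.toMulEquiv φ ψ h1 h2, ?_, ?_⟩
  · show φ (PresentedGroup.of 0) = _
    rw [hφ0, hA]
  · show φ (PresentedGroup.of 1) = _
    rw [hφ1, hB]
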